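/- Let n ≥ 3 and let D^{n-1} be the (n-1)-dimensional unit disk in the hyperplane ē^⊥ ⊂ ℝⁿ. For 1 ≤ i < n-1, the i-th area measure of D^{n-1} has density s_i(v) = ((n-1-i)/(n-1))(1 - ⟨ē,v⟩²)^{-i/2} with respect to spherical Lebesgue measure, and its mass on the polar cap satisfies S_i(D^{n-1}, C_r(ē)) ≥ κ_{n-1}(sin r)^{n-1-i} for all r ∈ [0, π/2], where κ_{n-1} is the volume of the (n-1)-dimensional unit ball and C_r(ē) = {v : ⟨ē,v⟩ > cos r}. -/

import Mathlib

open MeasureTheory Set Filter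

lemma auxFTC (c : ℝ) (m : ℕ) (hm : 1 ≤ m) (b s : ℝ) (hb : 0 ≤ b) (hbs : b ≤ s) (hs : s < 1) :
    ∫ t in Set.Ioo b s, c * t * (1 - t ^ 2) ^ (((m : ℝ) - 2) / 2) =
      c / (m : ℝ) * ((1 - b ^ 2) ^ ((m : ℝ) / 2) - (1 - s ^ 2) ^ ((m : ℝ) / 2)) := by
  have hmR : (1 : ℝ) ≤ (m : ℝ) := by exact_mod_cast hm
  have hm0 : (m : ℝ) ≠ 0 := by linarith
  have hne : ∀ t ∈ Set.Icc b s, (1 : ℝ) - t ^ 2 ≠ 0 := by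
    intro t ht
    have : (0:ℝ) < 1 - t ^ 2 := by nlinarith [ht.1, ht.2]
    linarith
  have key : ∀ t ∈ Set.uIcc b s,
      HasDerivAt (fun u : ℝ => -(c / (m : ℝ)) * (1 - u ^ 2) ^ ((m : ℝ) / 2))
        (c * t * (1 - t ^ 2) ^ (((m : ℝ) - 2) / 2)) t := by
    intro t ht
    rw [Set.uIcc_of_le hbs] at ht
    have h1 : (0 : ℝ) < 1 - t ^ 2 := by nlinarith [ht.1, ht.2]
    have hd : HasDerivAt (fun u : ℝ => 1 - u ^ 2) (-(2 * t)) t := by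
      simpa using ((hasDerivAt_pow 2 t).const_sub 1)
    have h2 := (hd.rpow_const (p := (m : ℝ) / 2) (Or.inl (ne_of_gt h1))).const_mul (-(c / (m : ℝ)))
    refine h2.congr_deriv ?_
    have he : (m : ℝ) / 2 - 1 = ((m : ℝ) - 2) / 2 := by ring
    rw [← he]
    field_simp
  have hInt : IntervalIntegrable (fun t : ℝ => c * t * (1 - t ^ 2) ^ (((m : ℝ) - 2) / 2))
      volume b s := by
    apply ContinuousOn.intervalIntegrable
    rw [Set.uIcc_of_le hbs]
    exact (continuousOn_const.mul continuousOn_id).mul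
      (ContinuousOn.rpow_const (by fun_prop) (fun t ht => Or.inl (hne t ht)))
  calc ∫ t in Set.Ioo b s, c * t * (1 - t ^ 2) ^ (((m : ℝ) - 2) / 2)
      = ∫ t in Set.Ioc b s, c * t * (1 - t ^ 2) ^ (((m : ℝ) - 2) / 2) :=
        integral_Ioc_eq_integral_Ioo.symm
    _ = ∫ t in b..s, c * t * (1 - t ^ 2) ^ (((m : ℝ) - 2) / 2) :=
        (intervalIntegral.integral_of_le hbs).symm
    _ = -(c / (m : ℝ)) * (1 - s ^ 2) ^ ((m : ℝ) / 2) -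
          -(c / (m : ℝ)) * (1 - b ^ 2) ^ ((m : ℝ) / 2) :=
        intervalIntegral.integral_eq_sub_of_hasDerivAt key hInt
    _ = c / (m : ℝ) * ((1 - b ^ 2) ^ ((m : ℝ) / 2) - (1 - s ^ 2) ^ ((m : ℝ) / 2)) := by ring

set_option maxHeartbeats 2000000 in

set_option maxHeartbeats 2000000 in


/-- The mass of polar caps of the `i`-th area measure of the `(n-1)`-dimensional unit disk
`D^{n-1} ⊂ e^⊥`. Here `σ` is the spherical Lebesgue measure on `S^{n-1}` (characterized on
zonal functions by the cylinder-coordinate formula with `ω_{n-1} = (n-1)κ_{n-1}` the surface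
area of `S^{n-2}`), and the `i`-th area measure of `D^{n-1}` is the measure with density
`s_i(v) = ((n-1-i)/(n-1))(1-⟨e,v⟩²)^{-i/2}` with respect to `σ` (for `1 ≤ i < n-1`). Its
mass on the polar cap `C_r(e)` is at least `κ_{n-1}(sin r)^{n-1-i}` for `r ∈ [0, π/2]`. -/
theorem disk_area_measure_cap_bound (n : ℕ) (hn : 3 ≤ n) (i : ℕ) (hi1 : 1 ≤ i)
    (hi2 : i < n - 1)
    (e : EuclideanSpace ℝ (Fin n)) (he : ‖e‖ = 1)
    (σ : Measure (EuclideanSpace ℝ (Fin n))) [IsFiniteMeasure σ]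
    (hσs : σ (Metric.sphere (0 : EuclideanSpace ℝ (Fin n)) 1)ᶜ = 0)
    (hσ : ∀ h : ℝ → ℝ, Continuous h →
      ∫ u, h ((inner ℝ e u : ℝ)) ∂σ =
        (((n : ℝ) - 1) * (volume (Metric.ball (0 : EuclideanSpace ℝ (Fin (n - 1))) 1)).toReal) *
          ∫ t in Set.Ioo (-1 : ℝ) 1, h t * (1 - t ^ 2) ^ (((n : ℝ) - 3) / 2)) :
    ∀ r ∈ Set.Icc (0 : ℝ) (Real.pi / 2),
      ENNReal.ofReal
          ((volume (Metric.ball (0 : EuclideanSpace ℝ (Fin (n - 1))) 1)).toReal *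
            Real.sin r ^ (n - 1 - i)) ≤
        (σ.withDensity fun v => ENNReal.ofReal
            ((((n : ℝ) - 1 - (i : ℝ)) / ((n : ℝ) - 1)) *
              (1 - (inner ℝ e v : ℝ) ^ 2) ^ (-(i : ℝ) / 2)))
          {v | v ∈ Metric.sphere (0 : EuclideanSpace ℝ (Fin n)) 1 ∧
            Real.cos r < (inner ℝ e v : ℝ)} := by
  intro r hr
  have hπ := Real.pi_pos
  set κ := (volume (Metric.ball (0 : EuclideanSpace ℝ (Fin (n - 1))) 1)).toReal with hκdef
  have hκ0 : 0 ≤ κ := ENNReal.toReal_nonneg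
  set a := Real.cos r with hadef
  have ha0 : 0 ≤ a := Real.cos_nonneg_of_mem_Icc ⟨by linarith [hr.1], hr.2⟩
  have ha1 : a ≤ 1 := Real.cos_le_one r
  set m := n - 1 - i with hmdef
  have hm1 : 1 ≤ m := by omega
  have hmR : ((m : ℕ) : ℝ) = (n : ℝ) - 1 - (i : ℝ) := by
    rw [hmdef, Nat.sub_sub, Nat.cast_sub (by omega), Nat.cast_add, Nat.cast_one]
    ring
  have hm1R : (1 : ℝ) ≤ (m : ℝ) := by exact_mod_cast hm1
  have hnR : (3 : ℝ) ≤ (n : ℝ) := by exact_mod_cast hn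
  set c := ((n : ℝ) - 1 - (i : ℝ)) / ((n : ℝ) - 1) with hcdef
  have hc0 : 0 ≤ c := div_nonneg (by linarith [hmR ▸ hm1R]) (by linarith)
  set cap := {v : EuclideanSpace ℝ (Fin n) | v ∈ Metric.sphere (0 : EuclideanSpace ℝ (Fin n)) 1 ∧
      Real.cos r < (inner ℝ e v : ℝ)} with hcapdef
  have hinnercont : Continuous (fun v : EuclideanSpace ℝ (Fin n) => (inner ℝ e v : ℝ)) :=
    Continuous.inner continuous_const continuous_id
  have hcapm : MeasurableSet cap := by
    apply MeasurableSet.inter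
    · exact Metric.isClosed_sphere.measurableSet
    · exact (isOpen_lt continuous_const hinnercont).measurableSet
  set μ := σ.withDensity fun v => ENNReal.ofReal (c * (1 - (inner ℝ e v : ℝ) ^ 2) ^ (-(i : ℝ) / 2))
    with hμdef
  -- the main step estimate
  have step : ∀ ε : ℝ, 0 < ε → ε ≤ (1 - a) / 2 →
      ENNReal.ofReal (κ * ((1 - (a + ε) ^ 2) ^ ((m : ℝ) / 2) - (1 - (1 - ε) ^ 2) ^ ((m : ℝ) / 2)))
        ≤ μ cap := by
    intro ε hε hεa
    set b := a + ε with hbdef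
    set s := 1 - ε with hsdef
    have hab : a < b := by rw [hbdef]; linarith
    have hb0 : 0 < b := lt_of_le_of_lt ha0 hab
    have hbs : b ≤ s := by rw [hbdef, hsdef]; linarith
    have hs1 : s < 1 := by rw [hsdef]; linarith
    have hs0 : 0 < s := lt_of_lt_of_le hb0 hbs
    have hss : 0 < 1 - s ^ 2 := by nlinarith
    set T : ℝ → ℝ := fun t => min (max t 0) s with hTdef
    set h : ℝ → ℝ := fun t => c * (min 1 (max 0 ((t - a) / ε)) *
      (min 1 (max 0 ((1 - ε / 2 - t) / (ε / 2))) *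
        (T t * (1 - T t ^ 2) ^ (-(i : ℝ) / 2)))) with hh
    have hTmem : ∀ t, 0 ≤ T t ∧ T t ≤ s := fun t =>
      ⟨le_min (le_max_right t 0) hs0.le, min_le_right _ _⟩
    have hTbase : ∀ t, 0 < 1 - T t ^ 2 := by
      intro t
      have := hTmem t
      nlinarith [this.1, this.2]
    have hTcont : Continuous T := (continuous_id.max continuous_const).min continuous_const
    have hcont : Continuous h := by
      apply continuous_const.mul
      apply Continuous.mul
      · fun_prop
      apply Continuous.mul
      · fun_prop
      apply hTcont.mul
      apply Continuous.rpow_const (continuous_const.sub (hTcont.pow 2))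
      intro t
      exact Or.inl (ne_of_gt (hTbase t))
    have hρnn : ∀ x : ℝ, 0 ≤ min 1 (max 0 x) := fun x => le_min zero_le_one (le_max_left 0 x)
    have hρle : ∀ x : ℝ, min 1 (max 0 x) ≤ 1 := fun x => min_le_left _ _
    have hPnn : ∀ t, 0 ≤ (1 - T t ^ 2) ^ (-(i : ℝ) / 2) := fun t =>
      Real.rpow_nonneg (hTbase t).le _
    have hhnn : ∀ t, 0 ≤ h t := fun t =>
      mul_nonneg hc0 (mul_nonneg (hρnn _) (mul_nonneg (hρnn _)
        (mul_nonneg (hTmem t).1 (hPnn t))))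
    -- a common bound
    have hBP : ∀ t, h t ≤ c * (1 - T t ^ 2) ^ (-(i : ℝ) / 2) := by
      intro t
      apply mul_le_mul_of_nonneg_left _ hc0
      calc min 1 (max 0 ((t - a) / ε)) * (min 1 (max 0 ((1 - ε / 2 - t) / (ε / 2))) *
            (T t * (1 - T t ^ 2) ^ (-(i : ℝ) / 2)))
          ≤ min 1 (max 0 ((1 - ε / 2 - t) / (ε / 2))) *
            (T t * (1 - T t ^ 2) ^ (-(i : ℝ) / 2)) :=
            mul_le_of_le_one_left (mul_nonneg (hρnn _) (mul_nonneg (hTmem t).1 (hPnn t))) (hρle _)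
        _ ≤ T t * (1 - T t ^ 2) ^ (-(i : ℝ) / 2) :=
            mul_le_of_le_one_left (mul_nonneg (hTmem t).1 (hPnn t)) (hρle _)
        _ ≤ 1 * (1 - T t ^ 2) ^ (-(i : ℝ) / 2) :=
            mul_le_mul_of_nonneg_right (le_trans (hTmem t).2 hs1.le) (hPnn t)
        _ = (1 - T t ^ 2) ^ (-(i : ℝ) / 2) := one_mul _
    have hB : ∀ t, h t ≤ c * (1 - s ^ 2) ^ (-(i : ℝ) / 2) := by
      intro t
      refine le_trans (hBP t) (mul_le_mul_of_nonneg_left ?_ hc0)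
      apply Real.rpow_le_rpow_of_nonpos hss
      · have := hTmem t
        nlinarith [this.1, this.2]
      · have : (0:ℝ) ≤ (i : ℝ) := Nat.cast_nonneg i
        linarith
    -- vanishing below the cap
    have hC : ∀ t, t ≤ a → h t = 0 := by
      intro t ht
      have h1 : max 0 ((t - a) / ε) = 0 :=
        max_eq_left (div_nonpos_of_nonpos_of_nonneg (by linarith) hε.le)
      rw [hh]
      simp [h1]
    -- the density bound on the cap
    have hD : ∀ t, a < t → t ≤ 1 → h t ≤ c * (1 - t ^ 2) ^ (-(i : ℝ) / 2) := by
      intro t hat ht1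
      by_cases h2 : 1 - ε / 2 ≤ t
      · have hz : min 1 (max 0 ((1 - ε / 2 - t) / (ε / 2))) = 0 := by
          rw [max_eq_left (div_nonpos_of_nonpos_of_nonneg (by linarith) (by linarith))]
          simp
        have : h t = 0 := by rw [hh]; simp [hz]
        rw [this]
        exact mul_nonneg hc0 (Real.rpow_nonneg (by nlinarith) _)
      · have ht1' : t < 1 := by linarith
        have h1t : 0 < 1 - t ^ 2 := by nlinarith
        have hTt : T t ≤ t := by
          rw [hTdef]
          simp only
          rw [max_eq_left (le_trans ha0 hat.le)]
          exact min_le_left _ _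
        refine le_trans (hBP t) (mul_le_mul_of_nonneg_left ?_ hc0)
        apply Real.rpow_le_rpow_of_nonpos h1t
        · nlinarith [(hTmem t).1, hTt]
        · have : (0:ℝ) ≤ (i : ℝ) := Nat.cast_nonneg i
          linarith
    -- exact value on the main interval
    have hE : ∀ t ∈ Set.Ioo b s, h t = c * t * (1 - t ^ 2) ^ (-(i : ℝ) / 2) := by
      intro t ht
      have ht0 : 0 < t := lt_trans hb0 ht.1
      have h1 : min 1 (max 0 ((t - a) / ε)) = 1 := by
        have hge : (1 : ℝ) ≤ (t - a) / ε := (le_div_iff₀ hε).2 (by rw [hbdef] at ht; linarith [ht.1])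
        rw [max_eq_right (le_trans zero_le_one hge), min_eq_left hge]
      have h2 : min 1 (max 0 ((1 - ε / 2 - t) / (ε / 2))) = 1 := by
        have hge : (1 : ℝ) ≤ (1 - ε / 2 - t) / (ε / 2) := by
          rw [le_div_iff₀ (by linarith)]
          rw [hsdef] at ht
          linarith [ht.2]
        rw [max_eq_right (le_trans zero_le_one hge), min_eq_left hge]
      have h3 : T t = t := by
        rw [hTdef]
        simp only
        rw [max_eq_left ht0.le, min_eq_left ht.2.le]
      rw [hh]
      simp only [h1, h2, h3, one_mul]
      ring
    -- integrability over σ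
    have hintσ : Integrable (fun v : EuclideanSpace ℝ (Fin n) => h ((inner ℝ e v : ℝ))) σ := by
      apply Integrable.mono' (integrable_const (c * (1 - s ^ 2) ^ (-(i : ℝ) / 2)))
        ((hcont.comp hinnercont).aestronglyMeasurable)
      filter_upwards with v
      simp only [Function.comp_apply]
      rw [Real.norm_eq_abs, abs_of_nonneg (hhnn _)]
      exact hB _
    have hae : ∀ᵐ v ∂σ, v ∈ Metric.sphere (0 : EuclideanSpace ℝ (Fin n)) 1 := by
      rw [ae_iff]
      exact hσs
    -- step 1 : lintegral bound
    have key1 : ∫⁻ v, ENNReal.ofReal (h ((inner ℝ e v : ℝ))) ∂σ ≤ μ cap := by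
      rw [hμdef, withDensity_apply _ hcapm, ← lintegral_indicator hcapm]
      apply lintegral_mono_ae
      filter_upwards [hae] with v hv
      by_cases hvc : Real.cos r < (inner ℝ e v : ℝ)
      · rw [Set.indicator_of_mem (by exact ⟨hv, hvc⟩)]
        apply ENNReal.ofReal_le_ofReal
        have hle1 : (inner ℝ e v : ℝ) ≤ 1 := by
          have := real_inner_le_norm e v
          rw [he, Metric.mem_sphere, dist_zero_right] at *
          rw [hv] at this
          linarith
        exact hD _ hvc hle1
      · rw [Set.indicator_of_notMem (by intro hmem; exact hvc hmem.2)]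
        rw [hC _ (not_lt.1 hvc), ENNReal.ofReal_zero]
    -- step 2 : from Bochner to lintegral
    have key2 : ENNReal.ofReal (∫ v, h ((inner ℝ e v : ℝ)) ∂σ) =
        ∫⁻ v, ENNReal.ofReal (h ((inner ℝ e v : ℝ))) ∂σ :=
      ofReal_integral_eq_lintegral_ofReal hintσ (Filter.Eventually.of_forall fun v => hhnn _)
    -- real integral estimates
    have hIntOn : IntegrableOn (fun t : ℝ => h t * (1 - t ^ 2) ^ (((n : ℝ) - 3) / 2))
        (Set.Ioo (-1 : ℝ) 1) volume := by
      have hmeas : AEStronglyMeasurable (fun t : ℝ => h t * (1 - t ^ 2) ^ (((n : ℝ) - 3) / 2))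
          (volume.restrict (Set.Ioo (-1 : ℝ) 1)) := by
        apply AEStronglyMeasurable.mul hcont.aestronglyMeasurable
        exact ((continuous_const.sub (continuous_pow 2)).rpow_const
          (fun x => Or.inr (by linarith))).aestronglyMeasurable
      apply Integrable.mono' (integrable_const (c * (1 - s ^ 2) ^ (-(i : ℝ) / 2))) hmeas
      filter_upwards [ae_restrict_mem measurableSet_Ioo] with t ht
      have hbase : (0:ℝ) ≤ 1 - t ^ 2 := by nlinarith [ht.1, ht.2]
      rw [Real.norm_eq_abs, abs_mul, abs_of_nonneg (hhnn t), abs_of_nonneg (Real.rpow_nonneg hbase _)]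
      calc h t * (1 - t ^ 2) ^ (((n : ℝ) - 3) / 2)
          ≤ (c * (1 - s ^ 2) ^ (-(i : ℝ) / 2)) * 1 := by
            apply mul_le_mul (hB t) _ (Real.rpow_nonneg hbase _)
              (mul_nonneg hc0 (Real.rpow_nonneg hss.le _))
            exact Real.rpow_le_one hbase (by nlinarith) (by linarith)
        _ = c * (1 - s ^ 2) ^ (-(i : ℝ) / 2) := mul_one _
    have hsubset : Set.Ioo b s ⊆ Set.Ioo (-1 : ℝ) 1 :=
      Set.Ioo_subset_Ioo (by linarith) hs1.le
    have hmono : ∫ t in Set.Ioo b s, h t * (1 - t ^ 2) ^ (((n : ℝ) - 3) / 2)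
        ≤ ∫ t in Set.Ioo (-1 : ℝ) 1, h t * (1 - t ^ 2) ^ (((n : ℝ) - 3) / 2) := by
      apply setIntegral_mono_set hIntOn
      · filter_upwards [ae_restrict_mem measurableSet_Ioo] with t ht
        have hbase : (0:ℝ) ≤ 1 - t ^ 2 := by nlinarith [ht.1, ht.2]
        exact mul_nonneg (hhnn t) (Real.rpow_nonneg hbase _)
      · exact HasSubset.Subset.eventuallyLE hsubset
    have hcongr : ∫ t in Set.Ioo b s, h t * (1 - t ^ 2) ^ (((n : ℝ) - 3) / 2)
        = ∫ t in Set.Ioo b s, c * t * (1 - t ^ 2) ^ (((m : ℝ) - 2) / 2) := by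
      apply setIntegral_congr_fun measurableSet_Ioo
      intro t ht
      have h1t : 0 < 1 - t ^ 2 := by
        have h0 : 0 < t := lt_trans hb0 ht.1
        nlinarith [ht.2]
      show h t * (1 - t ^ 2) ^ (((n : ℝ) - 3) / 2) = c * t * (1 - t ^ 2) ^ (((m : ℝ) - 2) / 2)
      rw [hE t ht, mul_assoc, mul_assoc, ← Real.rpow_add h1t]
      have hexp : -(i : ℝ) / 2 + ((n : ℝ) - 3) / 2 = ((m : ℝ) - 2) / 2 := by rw [hmR]; ring
      rw [hexp]
      ring
    have hftc := auxFTC c m hm1 b s hb0.le hbs hs1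
    -- assemble the real inequality
    have hreal : κ * ((1 - b ^ 2) ^ ((m : ℝ) / 2) - (1 - s ^ 2) ^ ((m : ℝ) / 2))
        ≤ ∫ v, h ((inner ℝ e v : ℝ)) ∂σ := by
      rw [hσ h hcont]
      have h1 : (((n : ℝ) - 1) * κ) *
          (∫ t in Set.Ioo b s, h t * (1 - t ^ 2) ^ (((n : ℝ) - 3) / 2))
          ≤ (((n : ℝ) - 1) * κ) *
          (∫ t in Set.Ioo (-1 : ℝ) 1, h t * (1 - t ^ 2) ^ (((n : ℝ) - 3) / 2)) :=
        mul_le_mul_of_nonneg_left hmono (mul_nonneg (by linarith) hκ0)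
      refine le_trans (le_of_eq ?_) h1
      rw [hcongr, hftc]
      have hmne : (m : ℝ) ≠ 0 := by linarith
      have hnne : (n : ℝ) - 1 ≠ 0 := by linarith
      rw [hcdef, ← hmR]
      field_simp
    calc ENNReal.ofReal (κ * ((1 - (a + ε) ^ 2) ^ ((m : ℝ) / 2) - (1 - (1 - ε) ^ 2) ^ ((m : ℝ) / 2)))
        ≤ ENNReal.ofReal (∫ v, h ((inner ℝ e v : ℝ)) ∂σ) := ENNReal.ofReal_le_ofReal hreal
      _ = ∫⁻ v, ENNReal.ofReal (h ((inner ℝ e v : ℝ))) ∂σ := key2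
      _ ≤ μ cap := key1
  -- now the limiting argument
  rcases eq_or_lt_of_le ha1 with hae | ha1'
  · -- a = 1 : sin r = 0
    have hsin : Real.sin r = 0 := by
      have h1 : Real.sin r ^ 2 = 0 := by
        have := Real.sin_sq_add_cos_sq r
        rw [← hadef] at this
        nlinarith
      exact pow_eq_zero_iff (by norm_num) |>.1 h1
    rw [hsin, zero_pow (by omega), mul_zero, ENNReal.ofReal_zero]
    exact zero_le
  · have h1a : 0 < (1 - a) / 2 := by linarith
    have hsin0 : 0 ≤ Real.sin r := Real.sin_nonneg_of_nonneg_of_le_pi hr.1 (by linarith [hr.2])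
    have hval : κ * ((1 - (a + 0) ^ 2) ^ ((m : ℝ) / 2) - (1 - (1 - 0) ^ 2) ^ ((m : ℝ) / 2))
        = κ * Real.sin r ^ m := by
      have hs2 : Real.sin r ^ 2 = 1 - a ^ 2 := by
        rw [hadef, Real.sin_sq]
      have hterm : (1 - (a + 0) ^ 2) ^ ((m : ℝ) / 2) = Real.sin r ^ m := by
        rw [add_zero, ← hs2]
        calc (Real.sin r ^ 2) ^ ((m : ℝ) / 2)
            = (Real.sin r ^ ((2 : ℕ) : ℝ)) ^ ((m : ℝ) / 2) := by rw [Real.rpow_natCast]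
          _ = Real.sin r ^ (((2 : ℕ) : ℝ) * ((m : ℝ) / 2)) := (Real.rpow_mul hsin0 _ _).symm
          _ = Real.sin r ^ ((m : ℕ) : ℝ) := by
                congr 1
                push_cast
                ring
          _ = Real.sin r ^ m := Real.rpow_natCast _ m
      have hzero : (1 - ((1:ℝ) - 0) ^ 2) ^ ((m : ℝ) / 2) = 0 := by
        norm_num
        exact Real.zero_rpow (by positivity)
      rw [hterm, hzero, sub_zero]
    have hTend : Tendsto (fun ε : ℝ => ENNReal.ofReal
        (κ * ((1 - (a + ε) ^ 2) ^ ((m : ℝ) / 2) - (1 - (1 - ε) ^ 2) ^ ((m : ℝ) / 2))))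
        (nhdsWithin 0 (Set.Ioi 0)) (nhds (ENNReal.ofReal (κ * Real.sin r ^ m))) := by
      have hc1 : ContinuousAt (fun ε : ℝ => (1 - (a + ε) ^ 2) ^ ((m : ℝ) / 2)) 0 :=
        ContinuousAt.rpow_const (by fun_prop) (Or.inr (by positivity))
      have hc2 : ContinuousAt (fun ε : ℝ => (1 - (1 - ε) ^ 2) ^ ((m : ℝ) / 2)) 0 :=
        ContinuousAt.rpow_const (by fun_prop) (Or.inr (by positivity))
      have hc3 : ContinuousAt (fun ε : ℝ => κ *
          ((1 - (a + ε) ^ 2) ^ ((m : ℝ) / 2) - (1 - (1 - ε) ^ 2) ^ ((m : ℝ) / 2))) 0 :=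
        continuousAt_const.mul (hc1.sub hc2)
      have hc4 := (ENNReal.continuous_ofReal.continuousAt.comp hc3)
      have := hc4.continuousWithinAt (s := Set.Ioi (0:ℝ))
      rw [ContinuousWithinAt] at this
      convert this using 2
      · rfl
      rw [← hval]
      rfl
    apply le_of_tendsto hTend
    filter_upwards [Ioc_mem_nhdsGT h1a] with ε hε
    exact step ε hε.1 hε.2
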